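/- Let G and H be graphs and let S ⊆ V(G × H) (vertices common to the Cartesian and strong products). If every vertex of S has at least two neighbors outside S in the Cartesian product G □ H, then S is a failed zero forcing set for the strong product G ⊠ H, and hence F(G ⊠ H) ≥ |S|. -/

import Mathlib

namespace ZeroForcing

/-- One step of the zero forcing process: all vertices forced from blue set `S`
(a blue vertex with exactly one white neighbor forces that neighbor). -/
def step {V : Type*} (G : SimpleGraph V) (S : Set V) : Set V :=
  S ∪ {v | ∃ u ∈ S, G.Adj u v ∧ ∀ w, G.Adj u w → w ∉ S → w = v}

/-- `S` is a zero forcing set: iterating the color-change rule makes everything blue. -/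
def IsZeroForcingSet {V : Type*} (G : SimpleGraph V) (S : Set V) : Prop :=
  ∃ k, (step G)^[k] S = Set.univ

/-- `S` is a failed zero forcing set. -/
def IsFailedSet {V : Type*} (G : SimpleGraph V) (S : Set V) : Prop :=
  ¬ IsZeroForcingSet G S

/-- The zero forcing number `Z(G)`. -/
noncomputable def Z {V : Type*} (G : SimpleGraph V) : ℕ :=
  sInf {k | ∃ S : Set V, S.ncard = k ∧ IsZeroForcingSet G S}

/-- The failed zero forcing number `F(G)`. -/
noncomputable def F {V : Type*} (G : SimpleGraph V) : ℕ :=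
  sSup {k | ∃ S : Set V, S.ncard = k ∧ IsFailedSet G S}

/-- The strong product of two simple graphs. -/
def strongProd {α β : Type*} (G : SimpleGraph α) (H : SimpleGraph β) :
    SimpleGraph (α × β) where
  Adj x y := x ≠ y ∧ (x.1 = y.1 ∨ G.Adj x.1 y.1) ∧ (x.2 = y.2 ∨ H.Adj x.2 y.2)
  symm := ⟨by
    rintro x y ⟨h1, h2, h3⟩
    exact ⟨h1.symm, h2.imp Eq.symm (fun h => G.adj_symm h), h3.imp Eq.symm (fun h => H.adj_symm h)⟩⟩
  loopless := ⟨fun x h => h.1 rfl⟩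

/-- The lexicographic product of two simple graphs. -/
def lexProd {α β : Type*} (G : SimpleGraph α) (H : SimpleGraph β) :
    SimpleGraph (α × β) where
  Adj x y := G.Adj x.1 y.1 ∨ (x.1 = y.1 ∧ H.Adj x.2 y.2)
  symm := ⟨by
    rintro x y (h | ⟨h1, h2⟩)
    · exact Or.inl h.symm
    · exact Or.inr ⟨h1.symm, h2.symm⟩⟩
  loopless := ⟨by
    rintro x (h | ⟨h1, h2⟩)
    · exact G.irrefl h
    · exact H.irrefl h2⟩

/-- The corona `G ∘ H`: one copy of `G` and, for each vertex `a` of `G`, a copy of `H`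
all of whose vertices are joined to `a`. -/
def corona {α β : Type*} (G : SimpleGraph α) (H : SimpleGraph β) :
    SimpleGraph (α ⊕ α × β) where
  Adj x y :=
    match x, y with
    | .inl a, .inl a' => G.Adj a a'
    | .inl a, .inr p => a = p.1
    | .inr p, .inl a' => p.1 = a'
    | .inr p, .inr q => p.1 = q.1 ∧ H.Adj p.2 q.2
  symm := ⟨by
    rintro (a | p) (a' | q) h
    · exact G.adj_symm h
    · exact h.symm
    · exact h.symm
    · exact ⟨h.1.symm, H.adj_symm h.2⟩⟩
  loopless := ⟨by
    rintro (a | p) h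
    · exact G.irrefl h
    · exact H.irrefl h.2⟩

end ZeroForcing

theorem strongProd_failed_of_two_white_nbrs_in_boxProd {α β : Type*}
    [Fintype α] [Fintype β] [Nonempty α] [Nonempty β]
    (G : SimpleGraph α) (H : SimpleGraph β) (S : Set (α × β))
    (hS : ∀ v ∈ S, 2 ≤ Set.ncard {w | (G.boxProd H).Adj v w ∧ w ∉ S}) :
    ZeroForcing.IsFailedSet (ZeroForcing.strongProd G H) S ∧
      S.ncard ≤ ZeroForcing.F (ZeroForcing.strongProd G H) := by

  classical
  -- box product adjacency implies strong product adjacency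
  have box_to_strong : ∀ v w : α × β, (G.boxProd H).Adj v w →
      (ZeroForcing.strongProd G H).Adj v w := by
    rintro ⟨a,b⟩ ⟨c,d⟩ h
    rcases h with ⟨hG, hbd⟩ | ⟨hH, hac⟩
    · exact ⟨by simp [Prod.ext_iff, hG.ne], Or.inr hG, Or.inl hbd⟩
    · exact ⟨by simp [Prod.ext_iff, hH.ne, hac], Or.inl hac, Or.inr hH⟩
  -- step fixes S
  have hstep : ZeroForcing.step (ZeroForcing.strongProd G H) S = S := by
    apply Set.Subset.antisymm
    · rintro v (hv | ⟨u, hu, hadj, hforce⟩)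
      · exact hv
      · exfalso
        have h2 := hS u hu
        have hfin : {w | (G.boxProd H).Adj u w ∧ w ∉ S}.Finite := Set.toFinite _
        obtain ⟨w1, w2, hw1, hw2, hne⟩ := (Set.one_lt_ncard_iff hfin).mp (hS u hu)
        have e1 := hforce w1 (box_to_strong u w1 hw1.1) hw1.2
        have e2 := hforce w2 (box_to_strong u w2 hw2.1) hw2.2
        exact hne (e1.trans e2.symm)
    · exact Set.subset_union_left
  have hiter : ∀ k, (ZeroForcing.step (ZeroForcing.strongProd G H))^[k] S = S := by
    intro k; induction k with
    | zero => rfl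
    | succ n ih => rw [Function.iterate_succ_apply', ih, hstep]
  have hSne : S ≠ Set.univ := by
    intro h
    obtain ⟨v⟩ := (inferInstance : Nonempty (α × β))
    have h2 := hS v (h ▸ Set.mem_univ v)
    have : {w | (G.boxProd H).Adj v w ∧ w ∉ S} = ∅ := by
      ext w; simp [h]
    rw [this] at h2; simp at h2
  have hfail : ZeroForcing.IsFailedSet (ZeroForcing.strongProd G H) S := by
    rintro ⟨k, hk⟩
    rw [hiter k] at hk
    exact hSne hk
  refine ⟨hfail, ?_⟩
  apply le_csSup
  · refine ⟨Nat.card (α × β), ?_⟩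
    rintro n ⟨T, rfl, -⟩
    simpa [Set.ncard_univ] using Set.ncard_le_ncard (Set.subset_univ T) Set.finite_univ
  · exact ⟨S, rfl, hfail⟩
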